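/- For every integer m ≥ 3, one has (m+1)^{(m+1)/2} · Γ(m/2) · e^{−1} / (m^{m/2} · Γ((m+1)/2)) ≤ √2 · (m(m+1))^{1/2}/(m−1) · (1 + 1/(m−2))^{−(m−2)/2}, where Γ denotes the Gamma function. -/

import Mathlib

open Real

/-- For every integer `m ≥ 3`,
`(m+1)^((m+1)/2) Γ(m/2) e⁻¹ / (m^(m/2) Γ((m+1)/2))
  ≤ √2 · (m(m+1))^(1/2)/(m−1) · (1 + 1/(m−2))^(−(m−2)/2)`. -/
theorem density_ratio_at_two_le_bound (m : ℕ) (hm : 3 ≤ m) :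
    ((m : ℝ) + 1) ^ (((m : ℝ) + 1) / 2) * Real.Gamma ((m : ℝ) / 2) *
        Real.exp (-1) /
      ((m : ℝ) ^ ((m : ℝ) / 2) * Real.Gamma (((m : ℝ) + 1) / 2)) ≤
    Real.sqrt 2 * ((m : ℝ) * ((m : ℝ) + 1)) ^ ((1 : ℝ) / 2) / ((m : ℝ) - 1) *
      (1 + 1 / ((m : ℝ) - 2)) ^ (-(((m : ℝ) - 2) / 2)) := by
  set a : ℝ := (m : ℝ) with hadef
  have ha : (3:ℝ) ≤ a := by rw [hadef]; exact_mod_cast hm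
  have ha0 : (0:ℝ) < a := by linarith
  have ha1 : (0:ℝ) < a - 1 := by linarith
  have ha2 : (0:ℝ) < a - 2 := by linarith
  have hap : (0:ℝ) < a + 1 := by linarith
  have hG1 : 0 < Real.Gamma (a/2) := Real.Gamma_pos_of_pos (by linarith)
  have hG2 : 0 < Real.Gamma ((a+1)/2) := Real.Gamma_pos_of_pos (by linarith)
  have hG0 : 0 < Real.Gamma ((a-1)/2) := Real.Gamma_pos_of_pos (by linarith)
  have hb1 : (0:ℝ) < 1 + 1/(a-2) := by positivity
  have hLpos : 0 < (a + 1) ^ ((a + 1) / 2) * Real.Gamma (a/2) * Real.exp (-1) /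
      (a ^ (a/2) * Real.Gamma ((a+1)/2)) := by positivity
  have hRpos : 0 < Real.sqrt 2 * (a * (a+1)) ^ ((1:ℝ)/2) / (a-1) *
      (1 + 1/(a-2)) ^ (-((a-2)/2)) := by positivity
  rw [← Real.log_le_log_iff hLpos hRpos,
    Real.log_div (by positivity) (by positivity),
    Real.log_mul (by positivity) (Real.exp_ne_zero _),
    Real.log_mul (by positivity) hG1.ne',
    Real.log_mul (by positivity) hG2.ne',
    Real.log_exp, Real.log_rpow hap, Real.log_rpow ha0,
    Real.log_mul (by positivity) (by positivity),
    Real.log_div (by positivity) ha1.ne',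
    Real.log_mul (by positivity) (by positivity),
    Real.log_sqrt (by norm_num), Real.log_rpow (by positivity), Real.log_rpow hb1,
    Real.log_mul ha0.ne' hap.ne']
  -- key elementary log bounds
  have h1 : a * (Real.log (a+1) - Real.log a) ≤ 1 := by
    have h := Real.log_le_sub_one_of_pos (show (0:ℝ) < (a+1)/a by positivity)
    rw [Real.log_div hap.ne' ha0.ne'] at h
    have h' : Real.log (a+1) - Real.log a ≤ 1/a := by
      have : (a+1)/a - 1 = 1/a := by field_simp; ring
      linarith [this ▸ h]
    have := mul_le_mul_of_nonneg_left h' ha0.le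
    calc a * (Real.log (a+1) - Real.log a) ≤ a * (1/a) := this
      _ = 1 := by field_simp
  have h2 : (a - 2) * Real.log (1 + 1/(a-2)) ≤ 1 := by
    have h := Real.log_le_sub_one_of_pos hb1
    have : (1:ℝ) + 1/(a-2) - 1 = 1/(a-2) := by ring
    rw [this] at h
    have := mul_le_mul_of_nonneg_left h ha2.le
    calc (a-2) * Real.log (1 + 1/(a-2)) ≤ (a-2) * (1/(a-2)) := this
      _ = 1 := by field_simp
  have h3 : Real.log (a-1) ≤ Real.log a := Real.log_le_log ha1 (by linarith)
  -- Gamma log-convexity step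
  have hconv := Real.convexOn_log_Gamma
  have hmid := hconv.2 (Set.mem_Ioi.mpr (show (0:ℝ) < (a-1)/2 by linarith))
      (Set.mem_Ioi.mpr (show (0:ℝ) < (a+1)/2 by linarith))
      (by norm_num : (0:ℝ) ≤ 1/2) (by norm_num : (0:ℝ) ≤ 1/2) (by norm_num)
  simp only [smul_eq_mul, Function.comp_apply] at hmid
  have harg : (1/2 : ℝ) * ((a-1)/2) + (1/2 : ℝ) * ((a+1)/2) = a/2 := by ring
  rw [harg] at hmid
  -- recurrence: Γ((a+1)/2) = ((a-1)/2) Γ((a-1)/2)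
  have hrec : Real.Gamma ((a+1)/2) = ((a-1)/2) * Real.Gamma ((a-1)/2) := by
    have := Real.Gamma_add_one (show (a-1)/2 ≠ 0 by positivity)
    rw [show (a-1)/2 + 1 = (a+1)/2 by ring] at this
    exact this
  have hrecl : Real.log (Real.Gamma ((a+1)/2)) =
      Real.log ((a-1)/2) + Real.log (Real.Gamma ((a-1)/2)) := by
    rw [hrec, Real.log_mul (by positivity) hG0.ne']
  have hld : Real.log ((a-1)/2) = Real.log (a-1) - Real.log 2 := by
    rw [Real.log_div ha1.ne' (by norm_num)]
  rw [hld] at hrecl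
  linarith [hmid, hrecl, h1, h2, h3]
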